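/- Let p = (p_i)_{i≥0} be a probability distribution on ℕ₀ with mean at most 1, and let T be a rooted plane tree with π_p(T) = 0 (i.e., p_{i₀} = 0 for some degree i₀ occurring in T). Define η̂_p(T,T) := −Σ_{i∈D(T)} n_T(i)² ∏_{j∈D(T)} p_j^{n_T(j)−δ_{ij}} and γ̂_p(T,T) := 1 + η̂_p(T,T). Then γ̂_p(T,T) > 0 unless: (i) |T| = 1, or (ii) T is a path and p_1 = 1, or (iii) T is a star consisting of a root of degree d joined to d leaves and p_0 = 1. -/

import Mathlib

inductive PTree : Type where
  | node : List PTree → PTree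

namespace PTree

/-- The number of vertices of a rooted plane tree. -/
def size : PTree → ℕ
  | node ts => 1 + (ts.attach.map (fun x => size x.1)).sum
decreasing_by
  simp only [PTree.node.sizeOf_spec]
  have := List.sizeOf_lt_of_mem x.2
  omega

/-- `degCount i T` is the number of vertices of `T` with exactly `i` children. -/
def degCount (i : ℕ) : PTree → ℕ
  | node ts => (if ts.length = i then 1 else 0) + (ts.attach.map (fun x => degCount i x.1)).sum
decreasing_by
  simp only [PTree.node.sizeOf_spec]
  have := List.sizeOf_lt_of_mem x.2
  omega

theorem size_node (ts : List PTree) : (node ts).size = 1 + (ts.map size).sum := by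
  rw [size]; simp

theorem degCount_node (i : ℕ) (ts : List PTree) :
    (node ts).degCount i = (if ts.length = i then 1 else 0) + (ts.map (degCount i)).sum := by
  rw [degCount]; simp

theorem myind {motive : PTree → Prop}
    (h : ∀ ts : List PTree, (∀ t ∈ ts, motive t) → motive (node ts)) :
    ∀ T, motive T
  | node ts => h ts (fun t ht => myind h t)
decreasing_by
  simp only [PTree.node.sizeOf_spec]
  have := List.sizeOf_lt_of_mem ht
  omega

theorem size_pos (T : PTree) : 1 ≤ T.size := by
  cases T with | node ts => rw [size_node]; omega

theorem length_le_sum_sizes (ts : List PTree) : ts.length ≤ (ts.map size).sum := by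
  induction ts with
  | nil => simp
  | cons a l ih => simp only [List.map_cons, List.sum_cons, List.length_cons]
                   have := size_pos a; omega

theorem size_le_of_mem {t : PTree} {ts : List PTree} (h : t ∈ ts) :
    t.size ≤ (ts.map size).sum :=
  List.single_le_sum (fun _ _ => Nat.zero_le _) _ (List.mem_map_of_mem (f := size) h)

theorem degCount_eq_zero_of_le : ∀ (T : PTree) (i : ℕ), T.size ≤ i → T.degCount i = 0 := by
  refine myind (fun ts ih i hi => ?_)
  rw [size_node] at hi
  rw [degCount_node]
  have h1 : ts.length ≠ i := by have := length_le_sum_sizes ts; omega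
  have h2 : (ts.map (degCount i)).sum = 0 := by
    rw [List.sum_eq_zero]
    intro x hx
    obtain ⟨t, ht, rfl⟩ := List.mem_map.mp hx
    exact ih t ht i (by have := size_le_of_mem ht; omega)
  simp [h1, h2]

theorem list_sum_comm (s : Finset ℕ) (ts : List PTree) (f : ℕ → PTree → ℕ) :
    ∑ i ∈ s, (ts.map (f i)).sum = (ts.map (fun t => ∑ i ∈ s, f i t)).sum := by
  induction ts with
  | nil => simp
  | cons a l ih => simp [Finset.sum_add_distrib, ih]

theorem mul_list_sum (a : ℕ) (l : List PTree) (f : PTree → ℕ) :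
    a * (l.map f).sum = (l.map (fun t => a * f t)).sum := by
  induction l with
  | nil => simp
  | cons b l ih => simp [Nat.mul_add, ih]

theorem sum_degCount : ∀ (T : PTree) (N : ℕ), T.size ≤ N →
    ∑ i ∈ Finset.range N, T.degCount i = T.size := by
  refine myind (fun ts ih N hN => ?_)
  rw [size_node] at hN ⊢
  have hlen : ts.length < N := by have := length_le_sum_sizes ts; omega
  simp only [degCount_node, Finset.sum_add_distrib]
  rw [Finset.sum_ite_eq (Finset.range N) ts.length (fun _ => 1),
    if_pos (Finset.mem_range.mpr hlen), list_sum_comm]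
  congr 1
  congr 1
  apply List.map_congr_left
  intro t ht
  exact ih t ht N (by have := size_le_of_mem ht; omega)

theorem sum_mul_degCount : ∀ (T : PTree) (N : ℕ), T.size ≤ N →
    ∑ i ∈ Finset.range N, i * T.degCount i + 1 = T.size := by
  refine myind (fun ts ih N hN => ?_)
  rw [size_node] at hN ⊢
  have hlen : ts.length < N := by have := length_le_sum_sizes ts; omega
  have e1 : ∀ i, i * ((node ts).degCount i) =
      (if ts.length = i then i else 0) + (ts.map (fun t => i * degCount i t)).sum := by
    intro i
    rw [degCount_node, Nat.mul_add, mul_list_sum]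
    congr 1
    split <;> simp
  simp only [e1, Finset.sum_add_distrib]
  rw [Finset.sum_ite_eq (Finset.range N) ts.length (fun i => i),
    if_pos (Finset.mem_range.mpr hlen), list_sum_comm]
  have key : ∀ t ∈ ts, (∑ i ∈ Finset.range N, i * degCount i t) + 1 = size t := by
    intro t ht
    exact ih t ht N (by have := size_le_of_mem ht; omega)
  have e2 : (ts.map (fun t => ∑ i ∈ Finset.range N, i * degCount i t)).sum + ts.length
      = (ts.map size).sum := by
    clear ih hN hlen e1
    induction ts with
    | nil => simp
    | cons a l ihl =>
        simp only [List.map_cons, List.sum_cons, List.length_cons]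
        have ha := key a (by simp)
        have hl := ihl (fun t ht => key t (List.mem_cons_of_mem _ ht))
        omega
  omega

theorem degCount_le_of_mem {t : PTree} {ts : List PTree} (h : t ∈ ts) (i : ℕ) :
    t.degCount i ≤ (node ts).degCount i := by
  rw [degCount_node]
  have : t.degCount i ≤ (ts.map (degCount i)).sum :=
    List.single_le_sum (fun _ _ => Nat.zero_le _) _ (List.mem_map_of_mem h)
  omega

theorem degCount_self_pos (ts : List PTree) : 1 ≤ (node ts).degCount ts.length := by
  rw [degCount_node, if_pos rfl]; omega

end PTree
/-- `piP p T = ∏_i p_i ^ n_T(i)`, the Galton--Watson probability of the plane tree `T`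
under offspring distribution `p`.  (All out-degrees of `T` are `< T.size`.) -/
noncomputable def piP (p : ℕ → ℝ) (T : PTree) : ℝ :=
  ∏ i ∈ Finset.range T.size, p i ^ T.degCount i
/-- The set `D(T)` of out-degrees occurring in `T`, as a finset. -/
def degSet (T : PTree) : Finset ℕ := (Finset.range T.size).filter (fun i => T.degCount i ≠ 0)


open PTree

theorem mem_degSet {T : PTree} {i : ℕ} : i ∈ degSet T ↔ T.degCount i ≠ 0 := by
  constructor
  · intro h; exact (Finset.mem_filter.mp h).2
  · intro h
    refine Finset.mem_filter.mpr ⟨Finset.mem_range.mpr ?_, h⟩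
    by_contra hc
    exact h (degCount_eq_zero_of_le T i (le_of_not_gt hc))

theorem sum_degCount_degSet (T : PTree) : ∑ i ∈ degSet T, T.degCount i = T.size := by
  rw [degSet, Finset.sum_filter_ne_zero]
  exact sum_degCount T _ le_rfl

theorem sum_mul_degCount_degSet (T : PTree) : ∑ i ∈ degSet T, i * T.degCount i + 1 = T.size := by
  rw [degSet, Finset.sum_filter_of_ne (fun x _ hx => by intro h0; rw [h0, Nat.mul_zero] at hx; exact hx rfl)]
  exact sum_mul_degCount T _ le_rfl

/-- `etaHat p T = -∑_{i ∈ D(T)} n_T(i)^2 ∏_{j ∈ D(T)} p_j ^ (n_T(j) - δ_{ij})`. -/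
noncomputable def etaHat (p : ℕ → ℝ) (T : PTree) : ℝ :=
  - ∑ i ∈ degSet T, (T.degCount i : ℝ) ^ 2 *
      ∏ j ∈ degSet T, p j ^ (T.degCount j - (if i = j then 1 else 0))

/-- `gammaHat p T = 1 + etaHat p T`. -/
noncomputable def gammaHat (p : ℕ → ℝ) (T : PTree) : ℝ := 1 + etaHat p T
/-- `T` is a path: every vertex has at most one child. -/
def IsPath (T : PTree) : Prop := ∀ i, 2 ≤ i → T.degCount i = 0

/-- `T` is a star: a root of degree `d ≥ 1` joined to `d` leaves. -/
def IsStar (T : PTree) : Prop :=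
  ∃ d : ℕ, 1 ≤ d ∧ T = PTree.node (List.replicate d (PTree.node []))


theorem isStar_of (T : PTree) (hsize : 2 ≤ T.size)
    (hD : ∀ i, T.degCount i ≠ 0 → i = 0 ∨ i = T.size - 1) : IsStar T := by
  obtain ⟨ts⟩ := T
  have hlen0 : ts.length ≠ 0 := by
    intro h
    rw [List.length_eq_zero_iff] at h
    subst h
    rw [size_node] at hsize
    simp at hsize
  have hroot : ts.length = (node ts).size - 1 := by
    rcases hD ts.length (by have := degCount_self_pos ts; omega) with h | h
    · exact absurd h hlen0
    · exact h
  have hchild : ∀ t ∈ ts, t = PTree.node [] := by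
    intro t ht
    obtain ⟨ts'⟩ := t
    have h1 : (node ts').size ≤ (node ts).size - 1 := by
      have h2 := size_le_of_mem ht
      have h3 := size_node ts
      omega
    by_contra hne
    have hlen' : ts'.length ≠ 0 := fun h => hne (by rw [List.length_eq_zero_iff] at h; rw [h])
    have hdt : (node ts').degCount ts'.length ≠ 0 := by have := degCount_self_pos ts'; omega
    have hdT : (node ts).degCount ts'.length ≠ 0 := by
      have := degCount_le_of_mem ht ts'.length
      have := degCount_self_pos ts'
      omega
    rcases hD _ hdT with h | h
    · exact hlen' h
    · have : ts'.length < (node ts').size := by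
        by_contra hc
        exact hdt (degCount_eq_zero_of_le _ _ (le_of_not_gt hc))
      omega
  refine ⟨ts.length, by omega, ?_⟩
  congr 1
  exact List.eq_replicate_iff.mpr ⟨rfl, hchild⟩

/-- If `p` is a probability distribution on `ℕ` with mean `≤ 1` and `T` is a plane tree with
`π_p(T) = 0`, then `γ̂_p(T,T) = 1 + η̂_p(T,T) > 0` unless `|T| = 1`, or `T` is a path and
`p₁ = 1`, or `T` is a star and `p₀ = 1`. -/
theorem stmt_12 (p : ℕ → ℝ) (hp0 : ∀ i, 0 ≤ p i) (hp1 : HasSum p 1)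
    (hmean : ∑' i : ℕ, (i : ℝ) * p i ≤ 1)
    (T : PTree) (hpi : piP p T = 0)
    (h1 : T.size ≠ 1) (h2 : ¬ (IsPath T ∧ p 1 = 1)) (h3 : ¬ (IsStar T ∧ p 0 = 1)) :
    0 < gammaHat p T := by
  classical
  have hple : ∀ j, p j ≤ 1 := fun j => le_hasSum hp1 j (fun i _ => hp0 i)
  obtain ⟨i₀, hi₀r, hi₀⟩ := Finset.prod_eq_zero_iff.mp hpi
  have hp_i₀ : p i₀ = 0 := by
    have := pow_eq_zero_iff'.mp hi₀
    exact this.1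
  have hn_i₀ : T.degCount i₀ ≠ 0 := (pow_eq_zero_iff'.mp hi₀).2
  have hi₀D : i₀ ∈ degSet T := mem_degSet.mpr hn_i₀
  by_cases hzero : (2 ≤ T.degCount i₀) ∨ ∃ j ∈ degSet T, j ≠ i₀ ∧ p j = 0
  · have heta : etaHat p T = 0 := by
      rw [etaHat, neg_eq_zero]
      apply Finset.sum_eq_zero
      intro i hiD
      have main : ∀ k ∈ degSet T, p k = 0 → (i ≠ k ∨ 2 ≤ T.degCount k) →
          (∏ j ∈ degSet T, p j ^ (T.degCount j - if i = j then 1 else 0)) = 0 := by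
        intro k hkD hpk hor
        apply Finset.prod_eq_zero hkD
        rw [hpk]
        apply zero_pow
        have hk := mem_degSet.mp hkD
        rcases hor with h | h <;> split <;> omega
      rcases hzero with h2 | ⟨j, hjD, hji, hpj⟩
      · rw [main i₀ hi₀D hp_i₀ (Or.inr h2), mul_zero]
      · by_cases hii : i = i₀
        · rw [main j hjD hpj (Or.inl (by omega)), mul_zero]
        · rw [main i₀ hi₀D hp_i₀ (Or.inl hii), mul_zero]
    rw [gammaHat, heta]
    norm_num
  · push_neg at hzero
    obtain ⟨hn2, hpos⟩ := hzero
    have hn_i₀1 : T.degCount i₀ = 1 := by omega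
    have heta : etaHat p T = - ∏ j ∈ (degSet T).erase i₀, p j ^ T.degCount j := by
      rw [etaHat, neg_inj]
      rw [Finset.sum_eq_single i₀]
      · rw [← Finset.mul_prod_erase _ _ hi₀D]
        have e1 : p i₀ ^ (T.degCount i₀ - if i₀ = i₀ then 1 else 0) = 1 := by
          rw [hn_i₀1]
          simp
        rw [e1, hn_i₀1]
        have e2 : ∀ j ∈ (degSet T).erase i₀,
            p j ^ (T.degCount j - if i₀ = j then 1 else 0) = p j ^ T.degCount j := by
          intro j hj
          have : i₀ ≠ j := fun h => (Finset.mem_erase.mp hj).1 h.symm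
          rw [if_neg this]
          simp
        rw [Finset.prod_congr rfl e2]
        norm_num
      · intro b hbD hbne
        have : (∏ j ∈ degSet T, p j ^ (T.degCount j - if b = j then 1 else 0)) = 0 := by
          apply Finset.prod_eq_zero hi₀D
          rw [hp_i₀, if_neg hbne, hn_i₀1]
          norm_num
        rw [this, mul_zero]
      · intro h
        exact absurd hi₀D h
    by_cases hall : ∀ j ∈ (degSet T).erase i₀, p j = 1
    · exfalso
      have hcard : ((degSet T).erase i₀).card ≤ 1 := by
        by_contra hc
        push_neg at hc
        obtain ⟨j₁, hj₁, j₂, hj₂, hne⟩ := Finset.one_lt_card.mp hc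
        have hsum2 : p j₁ + p j₂ ≤ 1 := by
          have h := sum_le_hasSum {j₁, j₂} (fun i _ => hp0 i) hp1
          rwa [Finset.sum_pair hne] at h
        rw [hall j₁ hj₁, hall j₂ hj₂] at hsum2
        linarith
      rcases Nat.le_one_iff_eq_zero_or_eq_one.mp hcard with h0 | hc1
      · have hD : degSet T = {i₀} := by
          have h := Finset.insert_erase hi₀D
          rw [Finset.card_eq_zero.mp h0] at h
          simp at h
          exact h.symm
        have : T.size = 1 := by
          rw [← sum_degCount_degSet T, hD, Finset.sum_singleton, hn_i₀1]
        exact h1 this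
      · obtain ⟨j, hj⟩ := Finset.card_eq_one.mp hc1
        have hjmem : j ∈ (degSet T).erase i₀ := hj ▸ Finset.mem_singleton_self j
        have hjD : j ∈ degSet T := Finset.mem_of_mem_erase hjmem
        have hji : j ≠ i₀ := (Finset.mem_erase.mp hjmem).1
        have hpj : p j = 1 := hall j hjmem
        have hD : degSet T = {i₀, j} := by
          have h := Finset.insert_erase hi₀D
          rw [hj] at h
          exact h.symm
        have hnj : T.degCount j ≠ 0 := mem_degSet.mp hjD
        have hi₀j : i₀ ∉ ({j} : Finset ℕ) := by
          simp only [Finset.mem_singleton]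
          exact fun h => hji h.symm
        have hsize : T.size = 1 + T.degCount j := by
          rw [← sum_degCount_degSet T, hD]
          rw [show ({i₀, j} : Finset ℕ) = insert i₀ {j} from rfl,
            Finset.sum_insert hi₀j, Finset.sum_singleton, hn_i₀1]
        have hedge : i₀ * T.degCount i₀ + j * T.degCount j + 1 = T.size := by
          rw [← sum_mul_degCount_degSet T, hD]
          rw [show ({i₀, j} : Finset ℕ) = insert i₀ {j} from rfl,
            Finset.sum_insert hi₀j, Finset.sum_singleton]
        rw [hn_i₀1, Nat.mul_one] at hedge
        have key : i₀ + j * T.degCount j = T.degCount j := by omega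
        rcases Nat.eq_zero_or_pos j with hj0 | hjpos
        · subst hj0
          have hi₀0 : i₀ ≠ 0 := fun h => hji h.symm
          have hkey : i₀ = T.degCount 0 := by omega
          apply h3
          refine ⟨isStar_of T (by omega) ?_, hpj⟩
          intro i hi
          have hiD : i ∈ degSet T := mem_degSet.mpr hi
          rw [hD] at hiD
          simp only [Finset.mem_insert, Finset.mem_singleton] at hiD
          rcases hiD with h | h
          · right; omega
          · left; exact h
        · have hnj1 : 1 ≤ T.degCount j := Nat.one_le_iff_ne_zero.mpr hnj
          have hjmul : T.degCount j ≤ j * T.degCount j := Nat.le_mul_of_pos_left _ hjpos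
          have hi₀0 : i₀ = 0 := by omega
          have hjeq : j = 1 := by
            rcases Nat.lt_or_ge j 2 with h | h
            · omega
            · exfalso
              have : 2 * T.degCount j ≤ j * T.degCount j := Nat.mul_le_mul_right _ h
              omega
          apply h2
          refine ⟨?_, hjeq ▸ hpj⟩
          intro i hi
          by_contra hne
          have hiD := mem_degSet.mpr hne
          rw [hD] at hiD
          simp only [Finset.mem_insert, Finset.mem_singleton] at hiD
          omega
    · push_neg at hall
      obtain ⟨j, hjmem, hpj1⟩ := hall
      have hjD : j ∈ degSet T := Finset.mem_of_mem_erase hjmem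
      have hnj : T.degCount j ≠ 0 := mem_degSet.mp hjD
      have hprod : ∏ k ∈ (degSet T).erase i₀, p k ^ T.degCount k < 1 := by
        rw [← Finset.mul_prod_erase _ _ hjmem]
        have h1 : p j ^ T.degCount j < 1 :=
          pow_lt_one₀ (hp0 j) (lt_of_le_of_ne (hple j) hpj1) hnj
        have h2 : ∏ k ∈ ((degSet T).erase i₀).erase j, p k ^ T.degCount k ≤ 1 :=
          Finset.prod_le_one (fun k _ => pow_nonneg (hp0 k) _)
            (fun k _ => pow_le_one₀ (hp0 k) (hple k))
        have h3 : (0:ℝ) ≤ ∏ k ∈ ((degSet T).erase i₀).erase j, p k ^ T.degCount k :=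
          Finset.prod_nonneg (fun k _ => pow_nonneg (hp0 k) _)
        calc p j ^ T.degCount j * ∏ k ∈ ((degSet T).erase i₀).erase j, p k ^ T.degCount k
            ≤ p j ^ T.degCount j * 1 := by
              apply mul_le_mul_of_nonneg_left h2 (pow_nonneg (hp0 j) _)
          _ = p j ^ T.degCount j := mul_one _
          _ < 1 := h1
      rw [gammaHat, heta]
      linarith
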